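/- For every permutation σ = (σ_1, …, σ_k) of {1, …, k} and every m ≥ 1, σ occurs as an exact subsequence of the zigzag word zz(m, k+1) if and only if m ≥ k + S(σ); in other words, the minimal number of runs of a zigzag word of alphabet width k+1 containing σ as an exact subsequence equals k + S(σ). -/

import Mathlib

/-- Parity sign: `1` for even integers, `-1` for odd integers. -/
def pSign (x : ℤ) : ℤ := if Even x then 1 else -1

/-- Local cost `C_{xy} = δ_{xy} − ((p_x p_y + 1)/2)·sgn(x−y)·p_x`. -/
def locCost (x y : ℤ) : ℤ :=
  (if x = y then 1 else 0) - ((pSign x * pSign y + 1) / 2) * (x - y).sign * pSign x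

/-- Sum of local costs over consecutive pairs of the sequence. -/
def pairCostSum (l : List ℤ) : ℤ := ((l.zip l.tail).map fun q => locCost q.1 q.2).sum

/-- Score `S(σ) = (1 + p_{σ₁})/2 + Σ_{i=1}^{k-1} C_{σ_i σ_{i+1}}`. -/
def score (l : List ℤ) : ℤ := (1 + pSign (l.headD 0)) / 2 + pairCostSum l

/-- Circular score `S^c(σ) = Σ_{i=1}^{k} C_{σ_i, σ_{(i mod k)+1}}` (indices cyclic). -/
def cscore (l : List ℤ) : ℤ := ((l.zip (l.rotate 1)).map fun q => locCost q.1 q.2).sum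

/-- The `j`-th run of the zigzag word over alphabet `{1, …, q}`: for odd `j` the odd
numbers in increasing order, for even `j` the even numbers in decreasing order. -/
def zrun (j q : ℕ) : List ℕ :=
  if j % 2 = 1 then (List.range (q + 1)).filter (fun n => n % 2 = 1)
  else ((List.range (q + 1)).filter (fun n => n % 2 = 0 && n != 0)).reverse

/-- The zigzag word `zz(m, q) = R₁ R₂ ⋯ R_m`. -/
def zz (m q : ℕ) : List ℕ := ((List.range m).map fun j => zrun (j + 1) q).flatten

/-! ### Auxiliary machinery -/

/-- `relB s x n` : in run of parity `s`, letter `n` comes strictly after letter `x`. -/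
def relB (s x n : ℕ) : Bool := if s % 2 = 1 then decide (x < n) else decide (n < x)

/-- Part of run `s` strictly after letter `x`. -/
def aft (s q x : ℕ) : List ℕ := (zrun s q).filter (relB s x)

/-- Zigzag word starting with run `s`, with `m` runs. -/
def zw (s m q : ℕ) : List ℕ := ((List.range m).map fun j => zrun (j + s) q).flatten

def stepR (x y : ℕ) : ℕ :=
  if x % 2 = y % 2 then (if (x % 2 = 1 ∧ x < y) ∨ (x % 2 = 0 ∧ y < x) then 0 else 2) else 1

def needAfter : ℕ → List ℕ → ℕ
  | _, [] => 0
  | x, y :: ys => stepR x y + needAfter y ys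

def startF (s y : ℕ) : ℕ := if y % 2 = s % 2 then 1 else 2

lemma zw_zero (s q : ℕ) : zw s 0 q = [] := rfl

lemma zw_succ (s m q : ℕ) : zw s (m + 1) q = zrun s q ++ zw (s + 1) m q := by
  have hfun : ((fun j => zrun (j + s) q) ∘ Nat.succ) = fun j => zrun (j + (s + 1)) q := by
    funext j
    have : j.succ + s = j + (s + 1) := by omega
    rw [Function.comp_apply, this]
  simp only [zw, List.range_succ_eq_map, List.map_cons, List.map_map, List.flatten_cons,
    Nat.zero_add, hfun]

lemma zz_eq_zw (m q : ℕ) : zz m q = zw 1 m q := rfl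

lemma mem_zrun {n s q : ℕ} : n ∈ zrun s q ↔ n % 2 = s % 2 ∧ 1 ≤ n ∧ n ≤ q := by
  rcases Nat.mod_two_eq_zero_or_one s with h | h <;>
    simp [zrun, h, List.mem_filter, List.mem_range] <;> omega

lemma relB_trans {s x y n : ℕ} (h1 : relB s x y) (h2 : relB s y n) : relB s x n = true := by
  unfold relB at *
  split at h1 <;> simp_all <;> omega

lemma relB_asym {s a b : ℕ} (h : relB s a b) : relB s b a = false := by
  unfold relB at *
  split at h <;> simp_all <;> omega

lemma pairwise_zrun (s q : ℕ) : (zrun s q).Pairwise fun a b => relB s a b = true := by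
  unfold zrun relB
  rcases Nat.mod_two_eq_zero_or_one s with h | h <;> simp only [h]
  · simp only [Nat.zero_ne_one, if_false]
    rw [List.pairwise_reverse]
    exact ((List.pairwise_lt_range).filter _).imp fun hab => by simp [hab]
  · simp only [if_true]
    exact ((List.pairwise_lt_range).filter _).imp fun hab => by simp [hab]

lemma split_pairwise (p : ℕ → ℕ → Bool) (hasym : ∀ a b, p a b → p b a = false)
    (L : List ℕ) (hp : L.Pairwise fun a b => p a b = true) {x : ℕ} (hx : x ∈ L) :
    L = L.filter (fun n => p n x) ++ x :: L.filter (fun n => p x n) := by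
  induction L with
  | nil => cases hx
  | cons a t ih =>
    rcases List.mem_cons.1 hx with rfl | hx'
    · have hxx : p x x = false := by
        cases h : p x x
        · rfl
        · have := hasym x x h; simp [h] at this
      have h1 : t.filter (fun n => p n x) = [] := by
        rw [List.filter_eq_nil_iff]
        intro b hb
        simp [hasym x b (List.rel_of_pairwise_cons hp hb)]
      have h2 : t.filter (fun n => p x n) = t :=
        List.filter_eq_self.2 fun b hb => List.rel_of_pairwise_cons hp hb
      simp [List.filter_cons, hxx, h1, h2]
    · have pax : p a x = true := List.rel_of_pairwise_cons hp hx'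
      have pxa : p x a = false := hasym _ _ pax
      rw [List.filter_cons, List.filter_cons, pax, pxa]
      simp only [if_true, Bool.false_eq_true, if_false, List.cons_append]
      rw [← ih hp.of_cons hx']

lemma sublist_filter_of_cons (p : ℕ → ℕ → Bool) :
    ∀ (L : List ℕ), L.Pairwise (fun a b => p a b = true) → ∀ {y : ℕ} {t : List ℕ},
      (y :: t).Sublist L → t.Sublist (L.filter fun n => p y n) := by
  intro L
  induction L with
  | nil => intro _ y t h; exact absurd h (by simp)
  | cons a L' ih =>
    intro hp y t h
    cases h with
    | cons _ h' =>
      exact (ih hp.of_cons h').trans (List.Sublist.filter _ (List.sublist_cons_self a L'))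
    | cons_cons _ h' =>
      have h2 : L'.filter (fun n => p a n) = L' :=
        List.filter_eq_self.2 fun b hb => List.rel_of_pairwise_cons hp hb
      exact (h2 ▸ h').trans (List.Sublist.filter _ (List.sublist_cons_self a L'))

lemma mem_aft {n s q x : ℕ} : n ∈ aft s q x ↔ n ∈ zrun s q ∧ relB s x n := by
  simp [aft, List.mem_filter]

lemma zrun_split {s q x : ℕ} (hx : x ∈ zrun s q) :
    zrun s q = (zrun s q).filter (fun n => relB s n x) ++ x :: aft s q x :=
  split_pairwise (relB s) (fun _ _ h => relB_asym h) _ (pairwise_zrun s q) hx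

lemma aft_aft {s q x y : ℕ} (hxy : relB s x y) :
    (aft s q x).filter (fun n => relB s y n) = aft s q y := by
  unfold aft
  rw [List.filter_filter]
  apply List.filter_congr
  intro n _
  cases h : relB s y n
  · simp
  · simp [relB_trans hxy h]

lemma aft_split {s q x y : ℕ} (hxy : relB s x y) (hy : y ∈ zrun s q) :
    aft s q x = (aft s q x).filter (fun n => relB s n y) ++ y :: aft s q y := by
  have hmem : y ∈ aft s q x := mem_aft.2 ⟨hy, hxy⟩
  have := split_pairwise (relB s) (fun _ _ h => relB_asym h) (aft s q x)
    ((pairwise_zrun s q).filter _) hmem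
  rwa [aft_aft hxy] at this

lemma cons_sub_append (B : List ℕ) {L : List ℕ} (y : ℕ) {ys : List ℕ} (h : ys.Sublist L) :
    (y :: ys).Sublist (B ++ y :: L) :=
  List.sublist_append_of_sublist_right (List.cons_sublist_cons.2 h)

lemma zrun_add_two (s q : ℕ) : zrun (s + 2) q = zrun s q := by
  simp [zrun, Nat.add_mod]

lemma suff : ∀ (l : List ℕ) (x s m q : ℕ), (∀ z ∈ l, 1 ≤ z ∧ z ≤ q) →
    x % 2 = s % 2 → needAfter x l ≤ m → l.Sublist (aft s q x ++ zw (s + 1) m q) := by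
  intro l
  induction l with
  | nil => intro _ _ _ _ _ _ _; exact List.nil_sublist _
  | cons y ys ih =>
    intro x s m q hb hx hm
    have hby : 1 ≤ y ∧ y ≤ q := hb y (by simp)
    have hb' : ∀ z ∈ ys, 1 ≤ z ∧ z ≤ q := fun z hz => hb z (by simp [hz])
    by_cases hpar : x % 2 = y % 2
    · by_cases hord : (x % 2 = 1 ∧ x < y) ∨ (x % 2 = 0 ∧ y < x)
      · -- step 0 : same run
        have hstep : stepR x y = 0 := by unfold stepR; rw [if_pos hpar, if_pos hord]
        have hrel : relB s x y = true := by
          unfold relB; rcases Nat.mod_two_eq_zero_or_one s with h | h <;> simp [h] <;> omega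
        have hyz : y ∈ zrun s q := mem_zrun.2 ⟨by omega, hby.1, hby.2⟩
        have hm' : needAfter y ys ≤ m := by
          have : needAfter x (y :: ys) = stepR x y + needAfter y ys := rfl
          omega
        have hsub := ih y s m q hb' (by have := mem_zrun.1 hyz; omega) hm'
        rw [aft_split hrel hyz, List.append_assoc, List.cons_append]
        exact cons_sub_append _ y hsub
      · -- step 2 : skip to the next run of the same parity
        have hstep : stepR x y = 2 := by unfold stepR; rw [if_pos hpar, if_neg hord]
        obtain ⟨m'', rfl⟩ : ∃ m'', m = m'' + 2 := by
          have : needAfter x (y :: ys) = stepR x y + needAfter y ys := rfl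
          refine ⟨m - 2, by omega⟩
        have hm' : needAfter y ys ≤ m'' := by
          have : needAfter x (y :: ys) = stepR x y + needAfter y ys := rfl
          omega
        have hyz : y ∈ zrun (s + 2) q := mem_zrun.2 ⟨by omega, hby.1, hby.2⟩
        have hsub := ih y (s + 2) m'' q hb' (by have := mem_zrun.1 hyz; omega) hm'
        apply List.sublist_append_of_sublist_right
        rw [zw_succ, zw_succ]
        apply List.sublist_append_of_sublist_right
        rw [zrun_split hyz, List.append_assoc, List.cons_append]
        exact cons_sub_append _ y hsub
    · -- step 1 : next run
      have hstep : stepR x y = 1 := by unfold stepR; rw [if_neg hpar]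
      obtain ⟨m', rfl⟩ : ∃ m', m = m' + 1 := by
        have : needAfter x (y :: ys) = stepR x y + needAfter y ys := rfl
        refine ⟨m - 1, by omega⟩
      have hm' : needAfter y ys ≤ m' := by
        have : needAfter x (y :: ys) = stepR x y + needAfter y ys := rfl
        omega
      have hyz : y ∈ zrun (s + 1) q := mem_zrun.2 ⟨by omega, hby.1, hby.2⟩
      have hsub := ih y (s + 1) m' q hb' (by have := mem_zrun.1 hyz; omega) hm'
      apply List.sublist_append_of_sublist_right
      rw [zw_succ]
      rw [zrun_split hyz, List.append_assoc, List.cons_append]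
      exact cons_sub_append _ y hsub

lemma startF_succ_le (s y : ℕ) : startF s y ≤ startF (s + 1) y + 1 := by
  unfold startF
  split <;> split <;> omega

lemma startF_pos (s y : ℕ) : 1 ≤ startF s y := by
  unfold startF; split <;> omega

lemma step_le_startF {x s y : ℕ} (hx : x % 2 = s % 2) : stepR x y ≤ startF (s + 1) y := by
  unfold stepR startF
  by_cases hpar : x % 2 = y % 2
  · rw [if_pos hpar, if_neg (show ¬ y % 2 = (s + 1) % 2 by omega)]
    split <;> omega
  · rw [if_neg hpar]
    split <;> omega

lemma stepR_eq_zero {x s y : ℕ} (hx : x % 2 = s % 2) (hy : y % 2 = s % 2)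
    (hrel : relB s x y = true) : stepR x y = 0 := by
  unfold relB at hrel
  unfold stepR
  split at hrel <;> simp_all <;> omega

lemma nec : ∀ n : ℕ,
    (∀ l : List ℕ, l.length ≤ n → ∀ x s m q, x % 2 = s % 2 →
        l.Sublist (aft s q x ++ zw (s + 1) m q) → needAfter x l ≤ m) ∧
    (∀ (y : ℕ) (ys : List ℕ), ys.length + 1 ≤ n → ∀ s m q,
        (y :: ys).Sublist (zw s m q) → startF s y + needAfter y ys ≤ m) := by
  intro n
  induction n with
  | zero =>
    constructor
    · intro l hl x s m q _ _
      have : l = [] := by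
        cases l with
        | nil => rfl
        | cons a t => simp at hl
      subst this
      simp [needAfter]
    · intro y ys hl s m q h
      exact absurd hl (by omega)
  | succ n ih =>
    obtain ⟨ih1, _⟩ := ih
    have part0 : ∀ (m : ℕ) (s y : ℕ) (ys : List ℕ) (q : ℕ), ys.length + 1 ≤ n + 1 →
        (y :: ys).Sublist (zw s m q) → startF s y + needAfter y ys ≤ m := by
      intro m
      induction m with
      | zero => intro s y ys q _ h; rw [zw_zero] at h; simp at h
      | succ m ihm =>
        intro s y ys q hlen h
        rw [zw_succ] at h
        obtain ⟨l1, l2, heq, h1, h2⟩ := List.sublist_append_iff.1 h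
        cases l1 with
        | nil =>
          have h2' : (y :: ys).Sublist (zw (s + 1) m q) := by
            rw [heq, List.nil_append]; exact h2
          have := ihm (s + 1) y ys q hlen h2'
          have := startF_succ_le s y
          omega
        | cons a t =>
          rw [List.cons_append] at heq
          injection heq with hh1 hys
          subst hh1
          have hyz : y ∈ zrun s q := h1.subset (by simp)
          have hpar : y % 2 = s % 2 := (mem_zrun.1 hyz).1
          have ht : t.Sublist (aft s q y) :=
            sublist_filter_of_cons (relB s) _ (pairwise_zrun s q) h1
          have hsub : ys.Sublist (aft s q y ++ zw (s + 1) m q) := by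
            rw [hys]; exact ht.append h2
          have hlen' : ys.length ≤ n := by omega
          have := ih1 ys hlen' y s m q hpar hsub
          have : startF s y = 1 := by simp [startF, hpar]
          omega
    have part1 : ∀ (l : List ℕ), l.length ≤ n + 1 → ∀ x s m q, x % 2 = s % 2 →
        l.Sublist (aft s q x ++ zw (s + 1) m q) → needAfter x l ≤ m := by
      intro l hlen x s m q hx h
      cases l with
      | nil => simp [needAfter]
      | cons y ys =>
        obtain ⟨l1, l2, heq, h1, h2⟩ := List.sublist_append_iff.1 h
        cases l1 with
        | nil =>
          have h2' : (y :: ys).Sublist (zw (s + 1) m q) := by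
            rw [heq, List.nil_append]; exact h2
          have hp0 := part0 m (s + 1) y ys q (by simpa using hlen) h2'
          have := step_le_startF (y := y) hx
          show stepR x y + needAfter y ys ≤ m
          omega
        | cons a t =>
          rw [List.cons_append] at heq
          injection heq with hh1 hys
          subst hh1
          have hya : y ∈ aft s q x := h1.subset (by simp)
          obtain ⟨hyz, hrel⟩ := mem_aft.1 hya
          have hpar : y % 2 = s % 2 := (mem_zrun.1 hyz).1
          have ht : t.Sublist ((aft s q x).filter fun n => relB s y n) :=
            sublist_filter_of_cons (relB s) _ ((pairwise_zrun s q).filter _) h1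
          rw [aft_aft hrel] at ht
          have hsub : ys.Sublist (aft s q y ++ zw (s + 1) m q) := by
            rw [hys]; exact ht.append h2
          have hlen' : ys.length ≤ n := by simp at hlen; omega
          have := ih1 ys hlen' y s m q hpar hsub
          have h0 := stepR_eq_zero hx hpar hrel
          show stepR x y + needAfter y ys ≤ m
          omega
    exact ⟨part1, fun y ys hl s m q h => part0 m s y ys q hl h⟩

lemma main_equiv {l : List ℕ} {y : ℕ} {ys : List ℕ} (hl : l = y :: ys) (q m : ℕ)
    (hb : ∀ z ∈ l, 1 ≤ z ∧ z ≤ q) :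
    l.Sublist (zw 1 m q) ↔ startF 1 y + needAfter y ys ≤ m := by
  subst hl
  constructor
  · intro h
    exact (nec (ys.length + 1)).2 y ys le_rfl 1 m q h
  · intro h
    have hby : 1 ≤ y ∧ y ≤ q := hb y (by simp)
    have hb' : ∀ z ∈ ys, 1 ≤ z ∧ z ≤ q := fun z hz => hb z (by simp [hz])
    by_cases hpar : y % 2 = 1 % 2
    · have hs : startF 1 y = 1 := by simp [startF, hpar]
      obtain ⟨m', rfl⟩ : ∃ m', m = m' + 1 := ⟨m - 1, by omega⟩
      have hm' : needAfter y ys ≤ m' := by omega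
      have hyz : y ∈ zrun 1 q := mem_zrun.2 ⟨hpar, hby.1, hby.2⟩
      have hsub := suff ys y 1 m' q hb' hpar hm'
      rw [zw_succ, zrun_split hyz, List.append_assoc, List.cons_append]
      exact cons_sub_append _ y hsub
    · have hs : startF 1 y = 2 := by simp [startF, hpar]
      obtain ⟨m'', rfl⟩ : ∃ m'', m = m'' + 2 := ⟨m - 2, by omega⟩
      have hm' : needAfter y ys ≤ m'' := by omega
      have hp2 : y % 2 = 2 % 2 := by omega
      have hyz : y ∈ zrun 2 q := mem_zrun.2 ⟨hp2, hby.1, hby.2⟩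
      have hsub := suff ys y 2 m'' q hb' hp2 hm'
      rw [zw_succ, zw_succ]
      apply List.sublist_append_of_sublist_right
      rw [zrun_split hyz, List.append_assoc, List.cons_append]
      exact cons_sub_append _ y hsub

lemma pSign_natCast (x : ℕ) : pSign (x : ℤ) = if x % 2 = 0 then 1 else -1 := by
  unfold pSign
  rcases Nat.mod_two_eq_zero_or_one x with h | h <;> simp [h, Int.even_coe_nat, Nat.even_iff]

lemma stepR_cast (x y : ℕ) : (stepR x y : ℤ) = 1 + locCost (x : ℤ) (y : ℤ) := by
  have hsign : ((x : ℤ) - y).sign = if x < y then -1 else if y < x then 1 else 0 := by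
    rcases lt_trichotomy x y with ho | ho | ho
    · rw [if_pos ho]; exact Int.sign_eq_neg_one_iff_neg.2 (by omega)
    · subst ho; simp
    · rw [if_neg (by omega), if_pos ho]; exact Int.sign_eq_one_iff_pos.2 (by omega)
  unfold stepR locCost
  rw [pSign_natCast, pSign_natCast, hsign]
  split_ifs <;> omega

lemma pairCostSum_cons (a b : ℤ) (t : List ℤ) :
    pairCostSum (a :: b :: t) = locCost a b + pairCostSum (b :: t) := by
  simp [pairCostSum]

lemma needAfter_cast (y : ℕ) (ys : List ℕ) :
    (needAfter y ys : ℤ) = ys.length + pairCostSum ((y :: ys).map fun n => (n : ℤ)) := by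
  induction ys generalizing y with
  | nil => simp [needAfter, pairCostSum]
  | cons z zs ih =>
    have h1 : needAfter y (z :: zs) = stepR y z + needAfter z zs := rfl
    have h2 : ((y :: z :: zs).map fun n => (n : ℤ)) =
        (y : ℤ) :: ((z :: zs).map fun n => (n : ℤ)) := rfl
    have h3 : ((z :: zs).map fun n => (n : ℤ)) =
        (z : ℤ) :: (zs.map fun n => (n : ℤ)) := rfl
    rw [h1, h2]
    conv_rhs => rw [h3]
    rw [pairCostSum_cons, ← h3]
    push_cast
    rw [stepR_cast, ih z, List.length_cons]
    push_cast
    ring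

theorem sublist_zz_iff_runs_ge_score (k : ℕ) (l : List ℕ)
    (hl : l.Perm ((List.range k).map (· + 1))) (m : ℕ) (hm : 1 ≤ m) :
    l.Sublist (zz m (k + 1)) ↔
      (k : ℤ) + score (l.map fun n => (n : ℤ)) ≤ (m : ℤ) := by
  have hlen : l.length = k := by simpa using hl.length_eq
  have hb : ∀ z ∈ l, 1 ≤ z ∧ z ≤ k + 1 := by
    intro z hz
    have := hl.subset hz
    simp only [List.mem_map, List.mem_range] at this
    obtain ⟨a, ha, rfl⟩ := this
    omega
  cases l with
  | nil =>
    have hk : k = 0 := by simpa using hlen.symm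
    subst hk
    simp only [List.nil_sublist, true_iff, List.map_nil]
    show (0 : ℤ) + score [] ≤ (m : ℤ)
    have : score [] = 1 := by simp [score, pSign, pairCostSum]
    rw [this]
    exact_mod_cast by omega
  | cons y ys =>
    rw [zz_eq_zw, main_equiv rfl (k + 1) m hb]
    have hk : (k : ℤ) = (ys.length : ℤ) + 1 := by
      have : ys.length + 1 = k := by simpa using hlen
      omega
    have hstart : (startF 1 y : ℤ) = 1 + (1 + pSign (y : ℤ)) / 2 := by
      unfold startF
      rw [pSign_natCast]
      split_ifs <;> omega
    have hhead : (((y :: ys).map fun n => (n : ℤ)).headD 0) = (y : ℤ) := by simp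
    have harith : (k : ℤ) + score ((y :: ys).map fun n => (n : ℤ)) =
        ((startF 1 y + needAfter y ys : ℕ) : ℤ) := by
      unfold score
      rw [hhead]
      push_cast
      rw [hstart, needAfter_cast, hk]
      linarith
    rw [harith]
    exact Nat.cast_le.symm
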